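/- Let X be a (75,32,10,16) strongly regular graph with a 4-clique K whose outside-degree distribution is (b_0,b_1,b_2,b_3)=(0,29,39,3) with b_4=0, and let x be one of the three vertices with 3 neighbors in K. If the three vertices with 3 neighbors in K form an independent set, then x has exactly 21 neighbors among the vertices with 1 neighbor in K and exactly 8 neighbors among the vertices with 2 neighbors in K. -/

import Mathlib

open Finset

/-- The number of neighbors of `x` inside the vertex set `K`. -/
def nbrs {V : Type*} [DecidableEq V] (G : SimpleGraph V) [DecidableRel G.Adj]
    (K : Finset V) (x : V) : ℕ :=
  (K.filter (fun y => G.Adj x y)).card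

/-- The number of vertices outside `K` with exactly `i` neighbors in `K`. -/
def bcount {V : Type*} [Fintype V] [DecidableEq V] (G : SimpleGraph V) [DecidableRel G.Adj]
    (K : Finset V) (i : ℕ) : ℕ :=
  ((univ \ K).filter (fun x => nbrs G K x = i)).card


/-- Case (0,29,39,3): if the three vertices with 3 neighbors in the 4-clique `K`
form an independent set, then each of them has exactly 21 neighbors among the
1-neighbor vertices and exactly 8 among the 2-neighbor vertices. -/
theorem stmt9 {V : Type*} [Fintype V] [DecidableEq V]
    (G : SimpleGraph V) [DecidableRel G.Adj]
    (hG : G.IsSRGWith 75 32 10 16)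
    (K : Finset V) (hK : G.IsNClique 4 K)
    (hb0 : bcount G K 0 = 0) (hb1 : bcount G K 1 = 29)
    (hb2 : bcount G K 2 = 39) (hb3 : bcount G K 3 = 3) (hb4 : bcount G K 4 = 0)
    (hind : ∀ a ∈ (univ \ K).filter (fun y => nbrs G K y = 3),
            ∀ b ∈ (univ \ K).filter (fun y => nbrs G K y = 3), ¬ G.Adj a b)
    (x : V) (hxK : x ∉ K) (hx : nbrs G K x = 3) :
    ((univ \ K).filter (fun y => nbrs G K y = 1 ∧ G.Adj x y)).card = 21 ∧
    ((univ \ K).filter (fun y => nbrs G K y = 2 ∧ G.Adj x y)).card = 8 := by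
  classical
  have hKcard : K.card = 4 := hK.2
  have hclique := hK.1
  have hx' : (K.filter (fun y => G.Adj x y)).card = 3 := hx
  set S : Finset V := (univ \ K).filter (fun y => G.Adj x y) with hS
  -- card of common neighbors as a filter card
  have hcommon : ∀ k : V, Fintype.card (G.commonNeighbors x k) =
      (univ.filter (fun y => G.Adj x y ∧ G.Adj k y)).card := by
    intro k
    rw [← Set.toFinset_card]
    congr 1
    ext y
    simp [SimpleGraph.mem_commonNeighbors]
  -- key decomposition for each clique vertex
  have key : ∀ k, (S.filter (fun y => G.Adj y k)).card
      + (K.filter (fun y => G.Adj x y ∧ G.Adj k y)).card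
      = Fintype.card (G.commonNeighbors x k) := by
    intro k
    rw [hcommon]
    have h1 : S.filter (fun y => G.Adj y k)
        = (univ.filter (fun y => G.Adj x y ∧ G.Adj k y)) \ K := by
      ext y
      simp only [hS, mem_filter, mem_sdiff, mem_univ, true_and]
      constructor
      · rintro ⟨⟨hyK, hxy⟩, hyk⟩; exact ⟨⟨hxy, hyk.symm⟩, hyK⟩
      · rintro ⟨⟨hxy, hky⟩, hyK⟩; exact ⟨⟨hyK, hxy⟩, hky.symm⟩
    have h2 : (univ.filter (fun y => G.Adj x y ∧ G.Adj k y)) ∩ K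
        = K.filter (fun y => G.Adj x y ∧ G.Adj k y) := by
      ext y
      simp only [mem_filter, mem_inter, mem_univ, true_and]
      tauto
    rw [h1, ← h2, Finset.card_sdiff_add_card_inter]
  -- inner count for k adjacent to x
  have inner_adj : ∀ k ∈ K, G.Adj x k →
      (K.filter (fun y => G.Adj x y ∧ G.Adj k y)).card = 2 := by
    intro k hkK hadj
    have heq : K.filter (fun y => G.Adj x y ∧ G.Adj k y)
        = (K.filter (fun y => G.Adj x y)).erase k := by
      ext y
      simp only [mem_filter, mem_erase]
      constructor
      · rintro ⟨hyK, hxy, hky⟩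
        exact ⟨fun h => G.loopless.irrefl k (h ▸ hky), hyK, hxy⟩
      · rintro ⟨hne, hyK, hxy⟩
        exact ⟨hyK, hxy,
          hclique (Finset.mem_coe.mpr hkK) (Finset.mem_coe.mpr hyK) (Ne.symm hne)⟩
    rw [heq, Finset.card_erase_of_mem (mem_filter.mpr ⟨hkK, hadj⟩), hx']
  -- inner count for k in K not adjacent to x
  have inner_nadj : ∀ k ∈ K, ¬ G.Adj x k →
      (K.filter (fun y => G.Adj x y ∧ G.Adj k y)).card = 3 := by
    intro k hkK hnadj
    have heq : K.filter (fun y => G.Adj x y ∧ G.Adj k y)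
        = K.filter (fun y => G.Adj x y) := by
      ext y
      simp only [mem_filter]
      constructor
      · rintro ⟨hyK, hxy, _⟩; exact ⟨hyK, hxy⟩
      · rintro ⟨hyK, hxy⟩
        refine ⟨hyK, hxy, hclique (Finset.mem_coe.mpr hkK) (Finset.mem_coe.mpr hyK) ?_⟩
        rintro rfl; exact hnadj hxy
    rw [heq, hx']
  -- double counting: sum of nbrs over S
  have hdouble : ∑ y ∈ S, nbrs G K y = ∑ k ∈ K, (S.filter (fun y => G.Adj y k)).card := by
    simp only [nbrs, Finset.card_filter]
    exact Finset.sum_comm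
  -- evaluate the double-count sum: it equals 37
  have hsum37 : ∑ y ∈ S, nbrs G K y = 37 := by
    rw [hdouble]
    rw [← Finset.sum_filter_add_sum_filter_not K (fun k => G.Adj x k)]
    have hA : ∀ k ∈ K.filter (fun k => G.Adj x k),
        (S.filter (fun y => G.Adj y k)).card = 8 := by
      intro k hk
      rw [mem_filter] at hk
      have h10 := hG.of_adj x k hk.2
      have := key k
      rw [inner_adj k hk.1 hk.2, h10] at this
      omega
    have hB : ∀ k ∈ K.filter (fun k => ¬ G.Adj x k),
        (S.filter (fun y => G.Adj y k)).card = 13 := by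
      intro k hk
      rw [mem_filter] at hk
      have hne : x ≠ k := fun h => hxK (h ▸ hk.1)
      have h16 := hG.of_not_adj hne hk.2
      have := key k
      rw [inner_nadj k hk.1 hk.2, h16] at this
      omega
    rw [Finset.sum_congr rfl hA, Finset.sum_congr rfl hB,
      Finset.sum_const, Finset.sum_const]
    have hcards := Finset.card_filter_add_card_filter_not
      (s := K) (p := fun k => G.Adj x k)
    rw [hKcard] at hcards
    have hc1 : (K.filter (fun k => G.Adj x k)).card = 3 := hx'
    have hc2 : (K.filter (fun k => ¬ G.Adj x k)).card = 1 := by omega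
    rw [hc1, hc2]
    simp
  -- |S| = 29
  have hScard : S.card = 29 := by
    have hdeg : (G.neighborFinset x).card = 32 := hG.regular x
    have hDS : S = G.neighborFinset x \ K := by
      ext y
      simp only [hS, mem_filter, mem_sdiff, mem_univ, true_and,
        SimpleGraph.mem_neighborFinset]
      tauto
    have h2 : G.neighborFinset x ∩ K = K.filter (fun y => G.Adj x y) := by
      ext y
      simp only [mem_inter, mem_filter, SimpleGraph.mem_neighborFinset]
      tauto
    have := Finset.card_sdiff_add_card_inter (G.neighborFinset x) K
    rw [h2, hx', hdeg] at this
    rw [hDS]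
    omega
  -- every y ∈ S has nbrs = 1 or 2
  have hval : ∀ y ∈ S, nbrs G K y = 1 ∨ nbrs G K y = 2 := by
    intro y hy
    rw [hS, mem_filter, mem_sdiff] at hy
    obtain ⟨⟨-, hyK⟩, hxy⟩ := hy
    have hle : nbrs G K y ≤ 4 := by
      calc nbrs G K y ≤ K.card := Finset.card_filter_le _ _
        _ = 4 := hKcard
    have hmem : ∀ i, nbrs G K y = i → 0 < bcount G K i := by
      intro i hi
      exact Finset.card_pos.mpr ⟨y, mem_filter.mpr ⟨mem_sdiff.mpr ⟨mem_univ y, hyK⟩, hi⟩⟩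
    have h0 : nbrs G K y ≠ 0 := fun h => by have := hmem 0 h; omega
    have h4 : nbrs G K y ≠ 4 := fun h => by have := hmem 4 h; omega
    have h3 : nbrs G K y ≠ 3 := by
      intro h
      exact hind x (mem_filter.mpr ⟨mem_sdiff.mpr ⟨mem_univ x, hxK⟩, hx⟩)
        y (mem_filter.mpr ⟨mem_sdiff.mpr ⟨mem_univ y, hyK⟩, h⟩) hxy
    omega
  -- identify the goal sets with filters of S
  have hN1 : (univ \ K).filter (fun y => nbrs G K y = 1 ∧ G.Adj x y)
      = S.filter (fun y => nbrs G K y = 1) := by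
    ext y
    simp only [hS, mem_filter, mem_sdiff, mem_univ, true_and]
    tauto
  have hN2 : (univ \ K).filter (fun y => nbrs G K y = 2 ∧ G.Adj x y)
      = S.filter (fun y => nbrs G K y = 2) := by
    ext y
    simp only [hS, mem_filter, mem_sdiff, mem_univ, true_and]
    tauto
  have hnot : S.filter (fun y => ¬ nbrs G K y = 1) = S.filter (fun y => nbrs G K y = 2) := by
    ext y
    simp only [mem_filter]
    constructor
    · rintro ⟨hy, hne⟩
      rcases hval y hy with h | h
      · exact absurd h hne
      · exact ⟨hy, h⟩
    · rintro ⟨hy, h⟩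
      exact ⟨hy, by omega⟩
  set n1 := (S.filter (fun y => nbrs G K y = 1)).card with hn1
  set n2 := (S.filter (fun y => nbrs G K y = 2)).card with hn2
  have hpart : n1 + n2 = 29 := by
    have := Finset.card_filter_add_card_filter_not
      (s := S) (p := fun y => nbrs G K y = 1)
    rw [hnot, hScard] at this
    exact this
  have hsumsplit : n1 + 2 * n2 = 37 := by
    have h := Finset.sum_filter_add_sum_filter_not S (fun y => nbrs G K y = 1)
      (fun y => nbrs G K y)
    rw [hnot] at h
    have e1 : ∑ y ∈ S.filter (fun y => nbrs G K y = 1), nbrs G K y = n1 := by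
      rw [Finset.sum_congr rfl (fun y hy => (mem_filter.mp hy).2), Finset.sum_const,
        smul_eq_mul, mul_one]
    have e2 : ∑ y ∈ S.filter (fun y => nbrs G K y = 2), nbrs G K y = 2 * n2 := by
      rw [Finset.sum_congr rfl (fun y hy => (mem_filter.mp hy).2), Finset.sum_const,
        smul_eq_mul, mul_comm]
    rw [e1, e2, hsum37] at h
    exact h
  rw [hN1, hN2, ← hn1, ← hn2]
  omega
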